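/- For every integer k with 2 ≤ k ≤ n, the following are equivalent: (i) u_j(X) = 0 for every j with 1 ≤ j < k; (ii) for every subset a ⊆ {1,…,n} with |a| ≤ k, the random variables (X_i)_{i∈a} are jointly independent. -/

import Mathlib

open MeasureTheory Finset

noncomputable section

variable {Ω : Type*} [MeasurableSpace Ω]

/-- Shannon entropy of a finite-valued random variable `Z` under the measure `μ`
(with the convention that the entropy of an empty tuple is `negMulLog (μ univ) = 0`
for a probability measure). -/
def ent {α : Type*} [Fintype α] (μ : Measure Ω) (Z : Ω → α) : ℝ :=
  ∑ z : α, Real.negMulLog ((μ (Z ⁻¹' {z})).toReal)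

/-- Conditional entropy `H(A | B)`. -/
def condEnt {α β : Type*} [Fintype α] [Fintype β] (μ : Measure Ω)
    (A : Ω → α) (B : Ω → β) : ℝ :=
  ent μ (fun ω => (A ω, B ω)) - ent μ B

/-- Mutual information `I(A ; B)`. -/
def mi {α β : Type*} [Fintype α] [Fintype β] (μ : Measure Ω)
    (A : Ω → α) (B : Ω → β) : ℝ :=
  ent μ A + ent μ B - ent μ (fun ω => (A ω, B ω))

/-- Conditional mutual information `I(A ; B | C)`. -/
def cmi {α β γ : Type*} [Fintype α] [Fintype β] [Fintype γ] (μ : Measure Ω)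
    (A : Ω → α) (B : Ω → β) (C : Ω → γ) : ℝ :=
  ent μ (fun ω => (A ω, C ω)) + ent μ (fun ω => (B ω, C ω))
    - ent μ (fun ω => (A ω, B ω, C ω)) - ent μ C

/-- The sub-tuple `X^a = (X_i)_{i ∈ a}` of the random vector `X = (X_1, …, X_n)`. -/
def restr {n : ℕ} {S : Type*} (X : Fin n → Ω → S) (a : Finset (Fin n)) :
    Ω → (a → S) :=
  fun ω i => X i.1 ω

/-- Average subset entropy `r_k(X) = C(n,k)⁻¹ ∑_{|a| = k} H(X^a)`. -/
def rE {n : ℕ} {S : Type*} [Fintype S] (μ : Measure Ω) (X : Fin n → Ω → S) (k : ℕ) : ℝ :=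
  ((n.choose k : ℝ))⁻¹ *
    ∑ a ∈ univ.powerset.filter (fun a : Finset (Fin n) => a.card = k), ent μ (restr X a)

/-- Average conditional pairwise mutual information
`u_k(X) = (C(n,k+1) C(k+1,2))⁻¹ ∑_{i<j} ∑_{|a| = k-1, i,j ∉ a} I(X_i ; X_j | X^a)`. -/
def uI {n : ℕ} {S : Type*} [Fintype S] (μ : Measure Ω) (X : Fin n → Ω → S) (k : ℕ) : ℝ :=
  ((n.choose (k + 1) : ℝ) * ((k + 1).choose 2 : ℝ))⁻¹ *
    ∑ p ∈ univ.filter (fun p : Fin n × Fin n => p.1 < p.2),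
      ∑ a ∈ (univ \ ({p.1, p.2} : Finset (Fin n))).powerset.filter
          (fun a : Finset (Fin n) => a.card = k - 1),
        cmi μ (X p.1) (X p.2) (restr X a)

namespace UAux

open Real

variable {α β γ : Type*}

/-- pointwise mass function -/
def pm (μ : Measure Ω) (Z : Ω → α) (z : α) : ℝ := (μ (Z ⁻¹' {z})).toReal

lemma pm_nonneg (μ : Measure Ω) (Z : Ω → α) (z : α) : 0 ≤ pm μ Z z := ENNReal.toReal_nonneg

lemma ent_eq [Fintype α] (μ : Measure Ω) (Z : Ω → α) :
    ent μ Z = ∑ z, Real.negMulLog (pm μ Z z) := rfl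

lemma ent_eq' [Fintype α] (μ : Measure Ω) (Z : Ω → α) :
    ent μ Z = - ∑ z, pm μ Z z * Real.log (pm μ Z z) := by
  rw [ent_eq, ← Finset.sum_neg_distrib]
  exact Finset.sum_congr rfl fun z _ => by rw [Real.negMulLog]; ring

lemma pm_mono (μ : Measure Ω) [IsFiniteMeasure μ] {Z : Ω → α} {W : Ω → β} {z : α} {w : β}
    (h : ∀ ω, Z ω = z → W ω = w) : pm μ Z z ≤ pm μ W w :=
  ENNReal.toReal_mono (measure_ne_top μ _) (measure_mono fun ω hω => h ω hω)

lemma pm_comp_equiv (μ : Measure Ω) (e : α ≃ β) (Z : Ω → α) (x : α) :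
    pm μ (fun ω => e (Z ω)) (e x) = pm μ Z x := by
  unfold pm
  have h : (fun ω => e (Z ω)) ⁻¹' {e x} = Z ⁻¹' {x} := by
    ext ω; simp [e.injective.eq_iff]
  rw [h]

lemma ent_comp_equiv [Fintype α] [Fintype β] (μ : Measure Ω) (e : α ≃ β) (Z : Ω → α) :
    ent μ (fun ω => e (Z ω)) = ent μ Z := by
  rw [ent_eq, ent_eq, ← Equiv.sum_comp e (fun z => Real.negMulLog (pm μ (fun ω => e (Z ω)) z))]
  exact Finset.sum_congr rfl fun z _ => by rw [pm_comp_equiv]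

lemma pm_preimage_finset [MeasurableSpace α] [MeasurableSingletonClass α]
    (μ : Measure Ω) [IsFiniteMeasure μ] {Z : Ω → α} (hZ : Measurable Z) (t : Finset α) :
    (μ (Z ⁻¹' ↑t)).toReal = ∑ z ∈ t, pm μ Z z := by
  have h1 : Z ⁻¹' ↑t = ⋃ z ∈ t, Z ⁻¹' {z} := by
    ext ω; simp
  have h2 : (↑t : Set α).PairwiseDisjoint (fun z => Z ⁻¹' {z}) := by
    intro x _ y _ hxy
    apply Set.disjoint_left.mpr
    intro ω h1 h2
    exact hxy ((Set.mem_singleton_iff.mp h1).symm.trans (Set.mem_singleton_iff.mp h2))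
  rw [h1, measure_biUnion_finset h2 (fun z _ => hZ (measurableSet_singleton z)),
    ENNReal.toReal_sum (fun z _ => measure_ne_top μ _)]
  rfl

lemma sum_pm [MeasurableSpace α] [MeasurableSingletonClass α] [Fintype α]
    (μ : Measure Ω) [IsProbabilityMeasure μ] {Z : Ω → α} (hZ : Measurable Z) :
    ∑ z, pm μ Z z = 1 := by
  have := pm_preimage_finset μ hZ Finset.univ
  rw [Finset.coe_univ, Set.preimage_univ, measure_univ] at this
  rw [← this, ENNReal.toReal_one]

variable [MeasurableSpace α] [MeasurableSingletonClass α] [Fintype α]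
variable [MeasurableSpace β] [MeasurableSingletonClass β] [Fintype β]
variable [MeasurableSpace γ] [MeasurableSingletonClass γ] [Fintype γ]

lemma pm_pair_snd (μ : Measure Ω) [IsProbabilityMeasure μ] {Z : Ω → α} {W : Ω → β}
    (hZ : Measurable Z) (hW : Measurable W) (w : β) :
    ∑ z, pm μ (fun ω => (Z ω, W ω)) (z, w) = pm μ W w := by
  classical
  have hinj : Function.Injective (fun z : α => (z, w)) := fun a b h => (Prod.mk.injEq _ _ _ _ ▸ h).1
  have h1 : (fun ω => (Z ω, W ω)) ⁻¹' ↑(Finset.univ.image (fun z : α => (z, w))) = W ⁻¹' {w} := by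
    ext ω
    simp [eq_comm, Prod.ext_iff]
  have h2 := pm_preimage_finset μ (hZ.prodMk hW) (Finset.univ.image (fun z : α => (z, w)))
  rw [h1, Finset.sum_image (fun a _ b _ h => hinj h)] at h2
  exact h2.symm

lemma pm_pair_fst (μ : Measure Ω) [IsProbabilityMeasure μ] {Z : Ω → α} {W : Ω → β}
    (hZ : Measurable Z) (hW : Measurable W) (z : α) :
    ∑ w, pm μ (fun ω => (Z ω, W ω)) (z, w) = pm μ Z z := by
  classical
  have hinj : Function.Injective (fun w : β => (z, w)) := fun a b h => (Prod.mk.injEq _ _ _ _ ▸ h).2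
  have h1 : (fun ω => (Z ω, W ω)) ⁻¹' ↑(Finset.univ.image (fun w : β => (z, w))) = Z ⁻¹' {z} := by
    ext ω
    simp [eq_comm, Prod.ext_iff]
  have h2 := pm_preimage_finset μ (hZ.prodMk hW) (Finset.univ.image (fun w : β => (z, w)))
  rw [h1, Finset.sum_image (fun a _ b _ h => hinj h)] at h2
  exact h2.symm

lemma pm_triple_mid (μ : Measure Ω) [IsProbabilityMeasure μ] {Z : Ω → α} {W : Ω → β} {V : Ω → γ}
    (hZ : Measurable Z) (hW : Measurable W) (hV : Measurable V) (z : α) (v : γ) :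
    ∑ w, pm μ (fun ω => (Z ω, W ω, V ω)) (z, w, v) = pm μ (fun ω => (Z ω, V ω)) (z, v) := by
  classical
  have hinj : Function.Injective (fun w : β => (z, w, v)) := by
    intro a b h
    simpa [Prod.ext_iff] using h
  have h1 : (fun ω => (Z ω, W ω, V ω)) ⁻¹' ↑(Finset.univ.image (fun w : β => (z, w, v)))
      = (fun ω => (Z ω, V ω)) ⁻¹' {(z, v)} := by
    ext ω
    simp [eq_comm, Prod.ext_iff]
  have h2 := pm_preimage_finset μ (hZ.prodMk (hW.prodMk hV))
    (Finset.univ.image (fun w : β => (z, w, v)))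
  rw [h1, Finset.sum_image (fun a _ b _ h => hinj h)] at h2
  exact h2.symm

/-! ### Gibbs' inequality -/

lemma gibbs_term {p q : ℝ} (hp : 0 ≤ p) (hq : 0 ≤ q) (hsupp : q = 0 → p = 0) :
    p * Real.log q - p * Real.log p ≤ q - p := by
  rcases eq_or_lt_of_le hp with h0 | hp'
  · simp [← h0, hq]
  · have hq' : 0 < q := (hq.lt_of_ne' fun h => hp'.ne' (hsupp h))
    have h1 := Real.log_le_sub_one_of_pos (div_pos hq' hp')
    have key : p * Real.log q - p * Real.log p ≤ p * (q / p - 1) := by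
      rw [← mul_sub, ← Real.log_div hq'.ne' hp'.ne']
      exact mul_le_mul_of_nonneg_left h1 hp'.le
    have h2 : p * (q / p - 1) = q - p := by field_simp
    linarith

lemma gibbs_term_eq {p q : ℝ} (hp : 0 ≤ p) (hq : 0 ≤ q) (hsupp : q = 0 → p = 0)
    (heq : p * Real.log q - p * Real.log p = q - p) : p = q := by
  rcases eq_or_lt_of_le hp with h0 | hp'
  · rw [← h0] at heq ⊢
    simp at heq
    rw [← heq]
  · have hq' : 0 < q := (hq.lt_of_ne' fun h => hp'.ne' (hsupp h))
    by_contra hne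
    have hne' : q / p ≠ 1 := by
      intro h
      rw [div_eq_one_iff_eq hp'.ne'] at h
      exact hne h.symm
    have h1 := Real.log_lt_sub_one_of_pos (div_pos hq' hp') hne'
    have key : p * Real.log q - p * Real.log p < p * (q / p - 1) := by
      rw [← mul_sub, ← Real.log_div hq'.ne' hp'.ne']
      exact mul_lt_mul_of_pos_left h1 hp'
    have h2 : p * (q / p - 1) = q - p := by field_simp
    linarith

lemma gibbs_le {ι : Type*} [Fintype ι] {p q : ι → ℝ} (hp : ∀ x, 0 ≤ p x) (hq : ∀ x, 0 ≤ q x)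
    (hsupp : ∀ x, q x = 0 → p x = 0) (hsp : ∑ x, p x = 1) (hsq : ∑ x, q x = 1) :
    ∑ x, p x * Real.log (q x) ≤ ∑ x, p x * Real.log (p x) := by
  have h2 := Finset.sum_le_sum (fun x (_ : x ∈ Finset.univ) =>
    gibbs_term (hp x) (hq x) (hsupp x))
  rw [Finset.sum_sub_distrib, Finset.sum_sub_distrib, hsp, hsq] at h2
  linarith

lemma gibbs_eq {ι : Type*} [Fintype ι] {p q : ι → ℝ} (hp : ∀ x, 0 ≤ p x) (hq : ∀ x, 0 ≤ q x)
    (hsupp : ∀ x, q x = 0 → p x = 0) (hsp : ∑ x, p x = 1) (hsq : ∑ x, q x = 1)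
    (h : ∑ x, p x * Real.log (q x) = ∑ x, p x * Real.log (p x)) : ∀ x, p x = q x := by
  have h1 : ∀ x ∈ Finset.univ, p x * Real.log (q x) - p x * Real.log (p x) ≤ q x - p x :=
    fun x _ => gibbs_term (hp x) (hq x) (hsupp x)
  have h2 : ∑ x, (p x * Real.log (q x) - p x * Real.log (p x)) = ∑ x, (q x - p x) := by
    rw [Finset.sum_sub_distrib, Finset.sum_sub_distrib, hsp, hsq, h]
    simp
  have h3 := (Finset.sum_eq_sum_iff_of_le h1).mp h2
  exact fun x => gibbs_term_eq (hp x) (hq x) (hsupp x) (h3 x (Finset.mem_univ x))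

/-! ### Pair entropy under independence -/

lemma ent_pair_of_fact (μ : Measure Ω) [IsProbabilityMeasure μ] {A : Ω → α} {B : Ω → β}
    (hA : Measurable A) (hB : Measurable B)
    (h : ∀ z w, pm μ (fun ω => (A ω, B ω)) (z, w) = pm μ A z * pm μ B w) :
    ent μ (fun ω => (A ω, B ω)) = ent μ A + ent μ B := by
  rw [ent_eq μ (fun ω => (A ω, B ω)), Fintype.sum_prod_type]
  have e1 : ∀ z, ∑ w, Real.negMulLog (pm μ (fun ω => (A ω, B ω)) (z, w))
      = Real.negMulLog (pm μ A z) + pm μ A z * ent μ B := by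
    intro z
    have : ∀ w, Real.negMulLog (pm μ (fun ω => (A ω, B ω)) (z, w))
        = pm μ B w * Real.negMulLog (pm μ A z) + pm μ A z * Real.negMulLog (pm μ B w) := by
      intro w
      rw [h z w, Real.negMulLog_mul]
    rw [Finset.sum_congr rfl (fun w _ => this w), Finset.sum_add_distrib, ← Finset.sum_mul,
      ← Finset.mul_sum, sum_pm μ hB, one_mul, ← ent_eq]
  rw [Finset.sum_congr rfl (fun z _ => e1 z), Finset.sum_add_distrib, ← Finset.sum_mul,
    ← ent_eq, sum_pm μ hA, one_mul]

/-! ### CMI core -/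

lemma cmi_core (μ : Measure Ω) [IsProbabilityMeasure μ] {A : Ω → α} {B : Ω → β} {C : Ω → γ}
    (hA : Measurable A) (hB : Measurable B) (hC : Measurable C) :
    0 ≤ cmi μ A B C ∧ (cmi μ A B C = 0 → ∀ x y z,
      pm μ (fun ω => (A ω, B ω, C ω)) (x, y, z) * pm μ C z
        = pm μ (fun ω => (A ω, C ω)) (x, z) * pm μ (fun ω => (B ω, C ω)) (y, z)) := by
  classical
  set p : α × β × γ → ℝ := pm μ (fun ω => (A ω, B ω, C ω)) with hp_def
  set pac : α × γ → ℝ := pm μ (fun ω => (A ω, C ω)) with hpac_def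
  set pbc : β × γ → ℝ := pm μ (fun ω => (B ω, C ω)) with hpbc_def
  set pc : γ → ℝ := pm μ C with hpc_def
  set q : α × β × γ → ℝ :=
    fun t => if pc t.2.2 = 0 then 0 else pac (t.1, t.2.2) * pbc (t.2.1, t.2.2) / pc t.2.2
    with hq_def
  have hp0 : ∀ t, 0 ≤ p t := fun t => pm_nonneg μ _ t
  have hpac0 : ∀ s, 0 ≤ pac s := fun s => pm_nonneg μ _ s
  have hpbc0 : ∀ s, 0 ≤ pbc s := fun s => pm_nonneg μ _ s
  have hpc0 : ∀ z, 0 ≤ pc z := fun z => pm_nonneg μ _ z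
  have hq0 : ∀ t, 0 ≤ q t := by
    intro t
    rw [hq_def]
    dsimp only
    split
    · exact le_rfl
    · exact div_nonneg (mul_nonneg (hpac0 _) (hpbc0 _)) (hpc0 _)
  have hmac : ∀ x y z, p (x, y, z) ≤ pac (x, z) := by
    intro x y z
    exact pm_mono μ (fun ω hω => by
      simp only [Prod.ext_iff] at hω ⊢
      exact ⟨hω.1, hω.2.2⟩)
  have hmbc : ∀ x y z, p (x, y, z) ≤ pbc (y, z) := by
    intro x y z
    exact pm_mono μ (fun ω hω => by
      simp only [Prod.ext_iff] at hω ⊢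
      exact ⟨hω.2.1, hω.2.2⟩)
  have hmc : ∀ x y z, p (x, y, z) ≤ pc z := by
    intro x y z
    exact pm_mono μ (fun ω hω => by
      simp only [Prod.ext_iff] at hω
      exact hω.2.2)
  have hacc : ∀ x z, pac (x, z) ≤ pc z := by
    intro x z
    exact pm_mono μ (fun ω hω => by
      simp only [Prod.ext_iff] at hω
      exact hω.2)
  have hbcc : ∀ y z, pbc (y, z) ≤ pc z := by
    intro y z
    exact pm_mono μ (fun ω hω => by
      simp only [Prod.ext_iff] at hω
      exact hω.2)
  have hsupp : ∀ t, q t = 0 → p t = 0 := by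
    rintro ⟨x, y, z⟩ hqt
    rw [hq_def] at hqt
    dsimp only at hqt
    by_cases hz : pc z = 0
    · exact le_antisymm (hz ▸ hmc x y z) (hp0 _)
    · rw [if_neg hz, div_eq_zero_iff] at hqt
      rcases hqt with h | h
      · rcases mul_eq_zero.mp h with h' | h'
        · exact le_antisymm (h' ▸ hmac x y z) (hp0 _)
        · exact le_antisymm (h' ▸ hmbc x y z) (hp0 _)
      · exact absurd h hz
  have hAB : Measurable fun ω => (A ω, B ω, C ω) := hA.prodMk (hB.prodMk hC)
  have hACm : Measurable fun ω => (A ω, C ω) := hA.prodMk hC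
  have hBCm : Measurable fun ω => (B ω, C ω) := hB.prodMk hC
  have hsp : ∑ t, p t = 1 := sum_pm μ hAB
  have hmargA : ∀ s : β × γ, ∑ x, p (x, s.1, s.2) = pbc s := by
    rintro ⟨y, z⟩
    exact pm_pair_snd μ hA hBCm (y, z)
  have hmargB : ∀ x z, ∑ y, p (x, y, z) = pac (x, z) := fun x z =>
    pm_triple_mid μ hA hB hC x z
  have hmargAC : ∀ z, ∑ x, pac (x, z) = pc z := fun z => pm_pair_snd μ hA hC z
  have hmargBC : ∀ z, ∑ y, pbc (y, z) = pc z := fun z => pm_pair_snd μ hB hC z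
  -- triple-sum reorganisation
  have hsplit : ∀ f : α × β × γ → ℝ, ∑ t, f t = ∑ x, ∑ y, ∑ z, f (x, y, z) := by
    intro f
    rw [Fintype.sum_prod_type]
    exact Finset.sum_congr rfl fun x _ => Fintype.sum_prod_type _
  have hsq : ∑ t, q t = 1 := by
    rw [hsplit q]
    have e1 : ∑ x, ∑ y, ∑ z, q (x, y, z) = ∑ z, ∑ x, ∑ y, q (x, y, z) :=
      (Finset.sum_congr rfl fun x _ => Finset.sum_comm).trans Finset.sum_comm
    rw [e1]
    have e2 : ∀ z, ∑ x, ∑ y, q (x, y, z) = pc z := by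
      intro z
      by_cases hz : pc z = 0
      · simp only [hq_def, hz, if_pos]
        simp [hz]
      · have e3 : ∀ x, ∑ y, q (x, y, z) = pac (x, z) * pc z / pc z := by
          intro x
          simp only [hq_def, if_neg hz]
          rw [← Finset.sum_div, ← Finset.mul_sum, hmargBC]
        rw [Finset.sum_congr rfl fun x _ => e3 x]
        have e4 : ∀ x, pac (x, z) * pc z / pc z = pac (x, z) := by
          intro x
          rw [mul_div_assoc, div_self hz, mul_one]
        rw [Finset.sum_congr rfl fun x _ => e4 x, hmargAC]
    rw [Finset.sum_congr rfl fun z _ => e2 z]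
    exact sum_pm μ hC
  have key := gibbs_le hp0 hq0 hsupp hsp hsq
  have hterm : ∀ t : α × β × γ, p t * Real.log (q t) =
      p t * Real.log (pac (t.1, t.2.2)) + p t * Real.log (pbc (t.2.1, t.2.2))
        - p t * Real.log (pc t.2.2) := by
    rintro ⟨x, y, z⟩
    by_cases hpt : p (x, y, z) = 0
    · rw [hpt]; ring
    · have hppos : 0 < p (x, y, z) := (hp0 _).lt_of_ne' hpt
      have hacpos : 0 < pac (x, z) := lt_of_lt_of_le hppos (hmac x y z)
      have hbcpos : 0 < pbc (y, z) := lt_of_lt_of_le hppos (hmbc x y z)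
      have hcpos : 0 < pc z := lt_of_lt_of_le hppos (hmc x y z)
      have hq' : q (x, y, z) = pac (x, z) * pbc (y, z) / pc z := by
        simp only [hq_def]
        rw [if_neg hcpos.ne']
      rw [hq', Real.log_div (mul_ne_zero hacpos.ne' hbcpos.ne') hcpos.ne',
        Real.log_mul hacpos.ne' hbcpos.ne']
      ring
  have hlogq : ∑ t, p t * Real.log (q t)
      = ∑ t, p t * Real.log (pac (t.1, t.2.2)) + ∑ t, p t * Real.log (pbc (t.2.1, t.2.2))
        - ∑ t, p t * Real.log (pc t.2.2) := by
    rw [← Finset.sum_add_distrib, ← Finset.sum_sub_distrib]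
    exact Finset.sum_congr rfl fun t _ => hterm t
  have T1 : ∑ t, p t * Real.log (pac (t.1, t.2.2)) = ∑ s : α × γ, pac s * Real.log (pac s) := by
    have h1 : ∑ t, p t * Real.log (pac (t.1, t.2.2))
        = ∑ x, ∑ y, ∑ z, p (x, y, z) * Real.log (pac (x, z)) := hsplit _
    have h2 : ∑ s : α × γ, pac s * Real.log (pac s)
        = ∑ x, ∑ z, pac (x, z) * Real.log (pac (x, z)) := Fintype.sum_prod_type _
    rw [h1, h2]
    refine Finset.sum_congr rfl fun x _ => ?_
    rw [Finset.sum_comm]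
    refine Finset.sum_congr rfl fun z _ => ?_
    rw [← Finset.sum_mul, hmargB]
  have T2 : ∑ t, p t * Real.log (pbc (t.2.1, t.2.2)) = ∑ s : β × γ, pbc s * Real.log (pbc s) := by
    have h1 : ∑ t, p t * Real.log (pbc (t.2.1, t.2.2))
        = ∑ x, ∑ s : β × γ, p (x, s.1, s.2) * Real.log (pbc s) := Fintype.sum_prod_type _
    rw [h1, Finset.sum_comm]
    refine Finset.sum_congr rfl fun s _ => ?_
    rw [← Finset.sum_mul, hmargA]
  have T3 : ∑ t, p t * Real.log (pc t.2.2) = ∑ z, pc z * Real.log (pc z) := by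
    have h1 : ∑ t, p t * Real.log (pc t.2.2)
        = ∑ x, ∑ s : β × γ, p (x, s.1, s.2) * Real.log (pc s.2) := Fintype.sum_prod_type _
    rw [h1, Finset.sum_comm]
    have h2 : ∀ s : β × γ, ∑ x, p (x, s.1, s.2) * Real.log (pc s.2) = pbc s * Real.log (pc s.2) := by
      intro s
      rw [← Finset.sum_mul, hmargA]
    rw [Finset.sum_congr rfl fun s _ => h2 s]
    have h3 : ∑ s : β × γ, pbc s * Real.log (pc s.2) = ∑ y, ∑ z, pbc (y, z) * Real.log (pc z) :=
      Fintype.sum_prod_type _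
    rw [h3, Finset.sum_comm]
    refine Finset.sum_congr rfl fun z _ => ?_
    rw [← Finset.sum_mul, hmargBC]
  have hentABC : ent μ (fun ω => (A ω, B ω, C ω)) = - ∑ t, p t * Real.log (p t) := ent_eq' μ _
  have hentAC : ent μ (fun ω => (A ω, C ω)) = - ∑ s, pac s * Real.log (pac s) := ent_eq' μ _
  have hentBC : ent μ (fun ω => (B ω, C ω)) = - ∑ s, pbc s * Real.log (pbc s) := ent_eq' μ _
  have hentC : ent μ C = - ∑ z, pc z * Real.log (pc z) := ent_eq' μ _
  have hcmi_expand : cmi μ A B C = ent μ (fun ω => (A ω, C ω)) + ent μ (fun ω => (B ω, C ω))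
      - ent μ (fun ω => (A ω, B ω, C ω)) - ent μ C := rfl
  constructor
  · linarith [key, hlogq, T1, T2, T3, hentABC, hentAC, hentBC, hentC, hcmi_expand]
  · intro hcmi x y z
    have heqsum : ∑ t, p t * Real.log (q t) = ∑ t, p t * Real.log (p t) := by
      linarith [hlogq, T1, T2, T3, hentABC, hentAC, hentBC, hentC, hcmi_expand, hcmi]
    have hpq := gibbs_eq hp0 hq0 hsupp hsp hsq heqsum
    by_cases hz : pc z = 0
    · have h1 : pac (x, z) = 0 := le_antisymm (hz ▸ hacc x z) (hpac0 _)
      have h2 : p (x, y, z) = 0 := le_antisymm (hz ▸ hmc x y z) (hp0 _)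
      rw [h1, h2, hz]
      ring
    · have hthis := hpq (x, y, z)
      have hq' : q (x, y, z) = pac (x, z) * pbc (y, z) / pc z := by
        simp only [hq_def]
        rw [if_neg hz]
      rw [hq'] at hthis
      rw [hthis]
      exact div_mul_cancel₀ _ hz

/-! ### Finite-tuple specific development -/

section Xdev

variable {S : Type*} [Fintype S] [MeasurableSpace S] [MeasurableSingletonClass S] {n : ℕ}

/-- Splitting equivalence for pi types over `insert i b`. -/
def insEquiv (S : Type*) {n : ℕ} (i : Fin n) (b : Finset (Fin n)) (hib : i ∉ b) :
    (↥(insert i b) → S) ≃ (S × (↥b → S)) where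
  toFun f := (f ⟨i, Finset.mem_insert_self i b⟩, fun j => f ⟨j.1, Finset.mem_insert_of_mem j.2⟩)
  invFun sg := fun j =>
    if h : j.1 = i then sg.1 else sg.2 ⟨j.1, (Finset.mem_insert.mp j.2).resolve_left h⟩
  left_inv f := by
    funext j
    by_cases h : j.1 = i
    · simp only [dif_pos h]
      congr 1
      exact Subtype.ext h.symm
    · simp only [dif_neg h]
  right_inv sg := by
    refine Prod.ext ?_ ?_
    · simp
    · funext j
      have h : j.1 ≠ i := fun h => hib (h ▸ j.2)
      simp only [dif_neg h]

lemma measurable_restr (X : Fin n → Ω → S) (hX : ∀ i, Measurable (X i)) (b : Finset (Fin n)) :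
    Measurable (restr X b) :=
  measurable_pi_lambda _ fun j => hX j.1

variable (μ : Measure Ω) [IsProbabilityMeasure μ] (X : Fin n → Ω → S)

lemma L_ins_pm {i : Fin n} {b : Finset (Fin n)} (hib : i ∉ b) (y : Fin n → S) :
    pm μ (fun ω => (X i ω, restr X b ω)) (y i, fun j : ↥b => y j.1)
      = pm μ (restr X (insert i b)) (fun j : ↥(insert i b) => y j.1) :=
  pm_comp_equiv μ (insEquiv S i b hib) (restr X (insert i b)) (fun j => y j.1)

lemma L_ins_ent {i : Fin n} {b : Finset (Fin n)} (hib : i ∉ b) :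
    ent μ (fun ω => (X i ω, restr X b ω)) = ent μ (restr X (insert i b)) :=
  ent_comp_equiv μ (insEquiv S i b hib) (restr X (insert i b))

lemma L_two_pm {i j : Fin n} {a : Finset (Fin n)} (hi : i ∉ insert j a) (hj : j ∉ a)
    (y : Fin n → S) :
    pm μ (fun ω => (X i ω, X j ω, restr X a ω)) (y i, y j, fun l : ↥a => y l.1)
      = pm μ (restr X (insert i (insert j a))) (fun m : ↥(insert i (insert j a)) => y m.1) :=
  pm_comp_equiv μ ((insEquiv S i (insert j a) hi).trans
    ((Equiv.refl S).prodCongr (insEquiv S j a hj))) (restr X (insert i (insert j a)))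
    (fun m => y m.1)

lemma L_two_ent {i j : Fin n} {a : Finset (Fin n)} (hi : i ∉ insert j a) (hj : j ∉ a) :
    ent μ (fun ω => (X i ω, X j ω, restr X a ω))
      = ent μ (restr X (insert i (insert j a))) :=
  ent_comp_equiv μ ((insEquiv S i (insert j a) hi).trans
    ((Equiv.refl S).prodCongr (insEquiv S j a hj))) (restr X (insert i (insert j a)))

/-- Full product (joint independence at the pmf level) for the subfamily `b`. -/
def Ffull (b : Finset (Fin n)) : Prop :=
  ∀ y : Fin n → S, pm μ (restr X b) (fun i : ↥b => y i.1) = ∏ l ∈ b, pm μ (X l) (y l)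

lemma Ffull_empty : Ffull μ X ∅ := by
  intro y
  unfold pm
  have h : restr X (∅ : Finset (Fin n)) ⁻¹' {fun i : ↥(∅ : Finset (Fin n)) => y i.1}
      = Set.univ := by
    refine Set.eq_univ_of_forall fun ω => ?_
    exact funext fun j => absurd j.2 (Finset.notMem_empty j.1)
  rw [h, measure_univ, ENNReal.toReal_one, Finset.prod_empty]

def singEquiv (S : Type*) {n : ℕ} (i : Fin n) : (↥({i} : Finset (Fin n)) → S) ≃ S where
  toFun f := f ⟨i, Finset.mem_singleton_self i⟩
  invFun s := fun _ => s
  left_inv f := by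
    funext j
    have hj : j = ⟨i, Finset.mem_singleton_self i⟩ := Subtype.ext (Finset.mem_singleton.mp j.2)
    rw [hj]
  right_inv s := rfl

lemma Ffull_singleton (i : Fin n) : Ffull μ X {i} := by
  intro y
  have h := pm_comp_equiv μ (singEquiv S i) (restr X {i}) (fun j : ↥({i} : Finset (Fin n)) => y j.1)
  rw [Finset.prod_singleton]
  exact h.symm

lemma Ffull_of_insert (hX : ∀ i, Measurable (X i)) {i : Fin n} {b : Finset (Fin n)}
    (hib : i ∉ b) (h : Ffull μ X (insert i b)) : Ffull μ X b := by
  classical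
  intro y
  have hsum := pm_pair_snd μ (hX i) (measurable_restr X hX b) (fun j : ↥b => y j.1)
  have hterm : ∀ s : S, pm μ (fun ω => (X i ω, restr X b ω)) (s, fun j : ↥b => y j.1)
      = pm μ (X i) s * ∏ l ∈ b, pm μ (X l) (y l) := by
    intro s
    set y' : Fin n → S := Function.update y i s with hy'
    have h1 : y' i = s := Function.update_self i s y
    have h2 : (fun j : ↥b => y' j.1) = fun j : ↥b => y j.1 := by
      funext j
      exact Function.update_of_ne (fun h : j.1 = i => hib (h ▸ j.2)) s y
    have h3 := L_ins_pm μ X hib y'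
    rw [h1, h2] at h3
    rw [h3, h y', Finset.prod_insert hib, h1]
    congr 1
    refine Finset.prod_congr rfl fun l hl => ?_
    rw [hy', Function.update_of_ne (fun hli : l = i => hib (hli ▸ hl)) s y]
  rw [← hsum, Finset.sum_congr rfl fun s _ => hterm s, ← Finset.sum_mul, sum_pm μ (hX i), one_mul]

lemma Ffull_subset (hX : ∀ i, Measurable (X i)) :
    ∀ b : Finset (Fin n), Ffull μ X b → ∀ c ⊆ b, Ffull μ X c := by
  intro b
  induction b using Finset.strongInduction with
  | _ b ih =>
    intro hb c hcb
    rcases eq_or_ne c b with rfl | hne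
    · exact hb
    · have hss : c ⊂ b := Finset.ssubset_iff_subset_ne.mpr ⟨hcb, hne⟩
      obtain ⟨i, hib, hic⟩ := Finset.exists_of_ssubset hss
      have hb' : Ffull μ X (b.erase i) := by
        apply Ffull_of_insert μ X hX (Finset.notMem_erase i b)
        rwa [Finset.insert_erase hib]
      exact ih (b.erase i) (Finset.erase_ssubset hib) hb' c (Finset.subset_erase.mpr ⟨hcb, hic⟩)

lemma ent_restr_eq_sum (hX : ∀ i, Measurable (X i)) :
    ∀ c : Finset (Fin n), (∀ c' ⊆ c, Ffull μ X c') →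
      ent μ (restr X c) = ∑ l ∈ c, ent μ (X l) := by
  classical
  intro c
  induction c using Finset.induction_on with
  | empty =>
    intro _
    rw [Finset.sum_empty, ent_eq]
    have h : ∀ z : (↥(∅ : Finset (Fin n)) → S), pm μ (restr X ∅) z = 1 := by
      intro z
      unfold pm
      have h1 : restr X (∅ : Finset (Fin n)) ⁻¹' {z} = Set.univ := by
        refine Set.eq_univ_of_forall fun ω => ?_
        exact funext fun j => absurd j.2 (Finset.notMem_empty j.1)
      rw [h1, measure_univ, ENNReal.toReal_one]
    rw [Finset.sum_congr rfl fun z _ => by rw [h z]]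
    simp
  | @insert i c hic ihc =>
    intro h
    have hIns : Ffull μ X (insert i c) := h _ (le_refl _)
    have hC : Ffull μ X c := h c (Finset.subset_insert i c)
    have hfact : ∀ (s : S) (x : ↥c → S),
        pm μ (fun ω => (X i ω, restr X c ω)) (s, x) = pm μ (X i) s * pm μ (restr X c) x := by
      intro s x
      set y : Fin n → S := fun l => if hl : l ∈ c then x ⟨l, hl⟩ else s with hy
      have h1 : y i = s := dif_neg hic
      have h2 : (fun j : ↥c => y j.1) = x := by
        funext j
        show (if hl : j.1 ∈ c then x ⟨j.1, hl⟩ else s) = x j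
        rw [dif_pos j.2]
      have h3 := L_ins_pm μ X hic y
      rw [h1, h2] at h3
      rw [h3, hIns y, Finset.prod_insert hic, h1, ← h2, hC y]
    rw [← L_ins_ent μ X hic,
      ent_pair_of_fact μ (hX i) (measurable_restr X hX c) hfact,
      ihc (fun c' hc' => h c' (hc'.trans (Finset.subset_insert i c))), Finset.sum_insert hic]

/-- Singletons generate the sigma-algebra on a finite type. -/
lemma generateFrom_singletons (T : Type*) [Fintype T] [m : MeasurableSpace T]
    [MeasurableSingletonClass T] :
    m = MeasurableSpace.generateFrom (Set.range fun s : T => ({s} : Set T)) := by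
  refine le_antisymm (fun t _ => ?_) ?_
  · have ht : t = ⋃ s ∈ t, {s} := by
      ext x; simp
    rw [ht]
    exact MeasurableSet.biUnion t.to_countable
      (fun s _ => MeasurableSpace.measurableSet_generateFrom ⟨s, rfl⟩)
  · rw [MeasurableSpace.generateFrom_le_iff]
    rintro s ⟨v, rfl⟩
    exact measurableSet_singleton v

lemma restr_preimage (c : Finset (Fin n)) (y : Fin n → S) :
    (⋂ l ∈ c, X l ⁻¹' {y l}) = restr X c ⁻¹' {fun i : ↥c => y i.1} := by
  ext ω
  simp only [Set.mem_iInter, Set.mem_preimage, Set.mem_singleton_iff, restr, funext_iff,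
    Subtype.forall]

lemma inter_fact (hX : ∀ i, Measurable (X i)) {b : Finset (Fin n)}
    (hF : ∀ c ⊆ b, Ffull μ X c) {c : Finset (Fin n)} (hcb : c ⊆ b) (y : Fin n → S) :
    μ (⋂ l ∈ c, X l ⁻¹' {y l}) = ∏ l ∈ c, μ (X l ⁻¹' {y l}) := by
  rw [restr_preimage]
  have h2 := hF c hcb y
  have hprod : ∏ l ∈ c, pm μ (X l) (y l) = (∏ l ∈ c, μ (X l ⁻¹' {y l})).toReal :=
    (ENNReal.toReal_prod _ _).symm
  rw [hprod] at h2
  have h3 : (∏ l ∈ c, μ (X l ⁻¹' {y l})) ≠ ⊤ :=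
    (ENNReal.prod_lt_top fun l _ => measure_lt_top μ _).ne
  exact (ENNReal.toReal_eq_toReal_iff' (measure_ne_top μ _) h3).mp h2

lemma iIndep_of_Ffull [Nonempty S] (hX : ∀ i, Measurable (X i)) {b : Finset (Fin n)}
    (hF : ∀ c ⊆ b, Ffull μ X c) :
    ProbabilityTheory.iIndepFun (m := fun _ : ↥b => (inferInstance : MeasurableSpace S))
      (fun i : ↥b => X i.1) μ := by
  classical
  rw [ProbabilityTheory.iIndepFun_iff_iIndep]
  refine ProbabilityTheory.iIndepSets.iIndep (fun i => (hX i.1).comap_le)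
    (fun i : ↥b => {s : Set Ω | ∃ v : S, s = X i.1 ⁻¹' {v}}) ?_ ?_ ?_
  · rintro i s ⟨v, rfl⟩ t ⟨w, rfl⟩ hst
    obtain ⟨ω, hω1, hω2⟩ := hst
    have hvw : v = w := by
      have e1 : X i.1 ω = v := hω1
      have e2 : X i.1 ω = w := hω2
      rw [← e1, ← e2]
    exact ⟨v, by rw [hvw, Set.inter_self]⟩
  · intro i
    rw [show (inferInstance : MeasurableSpace S) = MeasurableSpace.generateFrom
        (Set.range fun s : S => ({s} : Set S)) from generateFrom_singletons S,
      MeasurableSpace.comap_generateFrom]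
    congr 1
    ext s
    simp only [Set.mem_image, Set.mem_range, Set.mem_setOf_eq]
    constructor
    · rintro ⟨x, ⟨w, rfl⟩, rfl⟩
      exact ⟨w, rfl⟩
    · rintro ⟨v, rfl⟩
      exact ⟨{v}, ⟨v, rfl⟩, rfl⟩
  · rw [ProbabilityTheory.iIndepSets_iff]
    intro t f hf
    have hf' : ∀ i : ↥b, ∃ v : S, i ∈ t → f i = X i.1 ⁻¹' {v} := by
      intro i
      by_cases hi : i ∈ t
      · obtain ⟨v, hv⟩ := hf i hi
        exact ⟨v, fun _ => hv⟩
      · exact ⟨Classical.arbitrary S, fun hit => absurd hit hi⟩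
    choose v hv using hf'
    set y : Fin n → S := fun l => if hl : l ∈ b then v ⟨l, hl⟩ else Classical.arbitrary S with hy
    have hyv : ∀ i : ↥b, y i.1 = v i := by
      intro i
      show (if hl : i.1 ∈ b then v ⟨i.1, hl⟩ else _) = v i
      rw [dif_pos i.2]
    have hff : ∀ i ∈ t, f i = X i.1 ⁻¹' {y i.1} := fun i hi => by rw [hyv]; exact hv i hi
    have h1 : (⋂ i ∈ t, f i) = ⋂ i ∈ t, X i.1 ⁻¹' {y i.1} := by
      exact Set.iInter₂_congr hff
    have h2 : ∏ i ∈ t, μ (f i) = ∏ i ∈ t, μ (X i.1 ⁻¹' {y i.1}) :=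
      Finset.prod_congr rfl fun i hi => by rw [hff i hi]
    have hcb : t.image Subtype.val ⊆ b := by
      intro l hl
      obtain ⟨i, _, rfl⟩ := Finset.mem_image.mp hl
      exact i.2
    have h3 : (⋂ i ∈ t, X i.1 ⁻¹' {y i.1}) = ⋂ l ∈ t.image Subtype.val, X l ⁻¹' {y l} := by
      ext ω
      simp
    have h4 : ∏ l ∈ t.image Subtype.val, μ (X l ⁻¹' {y l}) = ∏ i ∈ t, μ (X i.1 ⁻¹' {y i.1}) :=
      Finset.prod_image fun i _ j _ hij => Subtype.ext hij
    rw [h1, h2, h3, ← h4]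
    exact inter_fact μ X hX hF hcb y

lemma Ffull_of_iIndep (hX : ∀ i, Measurable (X i)) {b : Finset (Fin n)}
    (h : ProbabilityTheory.iIndepFun (m := fun _ : ↥b => (inferInstance : MeasurableSpace S))
      (fun i : ↥b => X i.1) μ) : Ffull μ X b := by
  intro y
  have hmain := h.measure_inter_preimage_eq_mul (S := Finset.univ)
    (sets := fun i : ↥b => ({y i.1} : Set S)) (fun i _ => measurableSet_singleton _)
  have h1 : (⋂ i ∈ (Finset.univ : Finset ↥b), X i.1 ⁻¹' {y i.1})
      = restr X b ⁻¹' {fun i : ↥b => y i.1} := by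
    ext ω
    simp [restr, funext_iff]
  rw [h1] at hmain
  unfold pm
  rw [hmain, ENNReal.toReal_prod]
  exact Finset.prod_coe_sort b (fun l => (μ (X l ⁻¹' {y l})).toReal)

lemma Ffull_of_uI (hX : ∀ i, Measurable (X i)) (k : ℕ) (hk2 : k ≤ n)
    (h : ∀ j, 1 ≤ j → j < k → uI μ X j = 0) :
    ∀ b : Finset (Fin n), b.card ≤ k → Ffull μ X b := by
  classical
  suffices H : ∀ m, ∀ b : Finset (Fin n), b.card = m → b.card ≤ k → Ffull μ X b by
    intro b hb
    exact H b.card b rfl hb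
  intro m
  induction m using Nat.strong_induction_on with
  | _ m ih =>
    intro b hbm hbk
    rcases m with _ | m
    · rw [Finset.card_eq_zero.mp hbm]
      exact Ffull_empty μ X
    rcases m with _ | m'
    · obtain ⟨i, rfl⟩ := Finset.card_eq_one.mp hbm
      exact Ffull_singleton μ X i
    -- now b.card = m' + 2
    have hbne : b.Nonempty := Finset.card_pos.mp (by omega)
    have hb2 : 1 < b.card := by omega
    set i := b.min' hbne with hi
    set j := b.max' hbne with hj
    have hij : i < j := Finset.min'_lt_max'_of_card b hb2
    have hib : i ∈ b := Finset.min'_mem b hbne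
    have hjb : j ∈ b := Finset.max'_mem b hbne
    set a := (b.erase i).erase j with ha
    have hjne : j ≠ i := hij.ne'
    have hja : j ∉ a := Finset.notMem_erase j _
    have hj_mem : j ∈ b.erase i := Finset.mem_erase.mpr ⟨hjne, hjb⟩
    have hins1 : insert j a = b.erase i := Finset.insert_erase hj_mem
    have hia : i ∉ insert j a := hins1 ▸ Finset.notMem_erase i b
    have hins2 : insert i (insert j a) = b := by
      rw [hins1]
      exact Finset.insert_erase hib
    have hianot : i ∉ a := fun hia' => hia (Finset.mem_insert_of_mem hia')
    have hcard_a : a.card = m' := by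
      have h1 : a.card = (b.erase i).card - 1 := by
        rw [ha]
        exact Finset.card_erase_of_mem hj_mem
      have h2 : (b.erase i).card = b.card - 1 := Finset.card_erase_of_mem hib
      have h3 : 1 ≤ (b.erase i).card := Finset.card_pos.mpr ⟨j, hj_mem⟩
      omega
    have hu := h (m' + 1) (by omega) (by omega)
    have hcpos : (0:ℝ) < (n.choose (m' + 1 + 1) : ℝ) * (((m' + 1 + 1).choose 2 : ℕ) : ℝ) := by
      have c1 : 0 < n.choose (m' + 1 + 1) := Nat.choose_pos (by omega)
      have c2 : 0 < (m' + 1 + 1).choose 2 := Nat.choose_pos (by omega)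
      have c1' : (0:ℝ) < (n.choose (m' + 1 + 1) : ℝ) := by exact_mod_cast c1
      have c2' : (0:ℝ) < (((m' + 1 + 1).choose 2 : ℕ) : ℝ) := by exact_mod_cast c2
      exact mul_pos c1' c2'
    unfold uI at hu
    have hSig := (mul_eq_zero.mp hu).resolve_left (inv_ne_zero hcpos.ne')
    have hnn : ∀ p ∈ Finset.univ.filter (fun p : Fin n × Fin n => p.1 < p.2),
        0 ≤ ∑ a' ∈ (Finset.univ \ ({p.1, p.2} : Finset (Fin n))).powerset.filter
          (fun a' : Finset (Fin n) => a'.card = m' + 1 - 1),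
          cmi μ (X p.1) (X p.2) (restr X a') :=
      fun p _ => Finset.sum_nonneg fun a' _ =>
        (cmi_core μ (hX p.1) (hX p.2) (measurable_restr X hX a')).1
    have houter := (Finset.sum_eq_zero_iff_of_nonneg hnn).mp hSig
    have hmem1 : ((i, j) : Fin n × Fin n)
        ∈ Finset.univ.filter (fun p : Fin n × Fin n => p.1 < p.2) :=
      Finset.mem_filter.mpr ⟨Finset.mem_univ _, hij⟩
    have hinner := houter _ hmem1
    have hnn2 : ∀ a' ∈ (Finset.univ \ ({i, j} : Finset (Fin n))).powerset.filter
        (fun a' : Finset (Fin n) => a'.card = m' + 1 - 1),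
        0 ≤ cmi μ (X i) (X j) (restr X a') :=
      fun a' _ => (cmi_core μ (hX i) (hX j) (measurable_restr X hX a')).1
    have hmem2 : a ∈ (Finset.univ \ ({i, j} : Finset (Fin n))).powerset.filter
        (fun a' : Finset (Fin n) => a'.card = m' + 1 - 1) := by
      refine Finset.mem_filter.mpr ⟨Finset.mem_powerset.mpr ?_, by omega⟩
      intro l hl
      rw [Finset.mem_sdiff]
      refine ⟨Finset.mem_univ _, ?_⟩
      intro hlij
      rcases Finset.mem_insert.mp hlij with rfl | hlj
      · exact hianot hl
      · exact hja ((Finset.mem_singleton.mp hlj) ▸ hl)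
    have hczero : cmi μ (X i) (X j) (restr X a) = 0 :=
      (Finset.sum_eq_zero_iff_of_nonneg hnn2).mp hinner a hmem2
    have hfact := (cmi_core μ (hX i) (hX j) (measurable_restr X hX a)).2 hczero
    have hFa : Ffull μ X a := ih m' (by omega) a hcard_a (by omega)
    have hFia : Ffull μ X (insert i a) := by
      refine ih (m' + 1) (by omega) _ ?_ ?_
      · rw [Finset.card_insert_of_notMem hianot, hcard_a]
      · rw [Finset.card_insert_of_notMem hianot, hcard_a]
        omega
    have hFja : Ffull μ X (insert j a) := by
      refine ih (m' + 1) (by omega) _ ?_ ?_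
      · rw [Finset.card_insert_of_notMem hja, hcard_a]
      · rw [Finset.card_insert_of_notMem hja, hcard_a]
        omega
    rw [← hins2]
    intro y
    have hkey := hfact (y i) (y j) (fun l : ↥a => y l.1)
    rw [L_two_pm μ X hia hja y, L_ins_pm μ X hianot y, L_ins_pm μ X hja y] at hkey
    rw [hFa y, hFia y, hFja y] at hkey
    rw [Finset.prod_insert hianot, Finset.prod_insert hja] at hkey
    rw [Finset.prod_insert hia, Finset.prod_insert hja]
    by_cases hP : ∏ l ∈ a, pm μ (X l) (y l) = 0
    · obtain ⟨l, hla, hl0⟩ := Finset.prod_eq_zero_iff.mp hP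
      have hlb : l ∈ insert i (insert j a) :=
        Finset.mem_insert_of_mem (Finset.mem_insert_of_mem hla)
      have hle := pm_mono μ (Z := restr X (insert i (insert j a))) (W := X l)
        (z := fun m : ↥(insert i (insert j a)) => y m.1) (w := y l)
        (fun ω hω => congrFun hω ⟨l, hlb⟩)
      have hpm0 : pm μ (restr X (insert i (insert j a)))
          (fun m : ↥(insert i (insert j a)) => y m.1) = 0 :=
        le_antisymm (hl0 ▸ hle) (pm_nonneg μ _ _)
      rw [hpm0, hP]
      ring
    · apply mul_right_cancel₀ hP
      rw [hkey]
      ring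

end Xdev

end UAux

/-- For `2 ≤ k ≤ n`: `u_j(X) = 0` for all `1 ≤ j < k` if and only if,
for every subset `a ⊆ {1,…,n}` with `|a| ≤ k`, the variables `(X_i)_{i ∈ a}` are
jointly independent. -/
theorem u_vanish_iff_indep {Ω S : Type*} [MeasurableSpace Ω]
    [Fintype S] [MeasurableSpace S] [MeasurableSingletonClass S]
    {n : ℕ} (hn : 2 ≤ n) (μ : Measure Ω) [IsProbabilityMeasure μ]
    (X : Fin n → Ω → S) (hX : ∀ i, Measurable (X i))
    (k : ℕ) (hk1 : 2 ≤ k) (hk2 : k ≤ n) :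
    (∀ j, 1 ≤ j → j < k → uI μ X j = 0) ↔
      (∀ a : Finset (Fin n), a.card ≤ k →
        ProbabilityTheory.iIndepFun (m := fun _ : ↥a => (inferInstance : MeasurableSpace S))
          (fun i : ↥a => X i.1) μ) := by
  classical
  have hΩ : Nonempty Ω := by
    by_contra hempty
    rw [not_nonempty_iff] at hempty
    have h1 : μ Set.univ = 1 := measure_univ
    rw [Set.univ_eq_empty_iff.mpr hempty, measure_empty] at h1
    exact zero_ne_one h1
  obtain ⟨ω0⟩ := hΩ
  have hS : Nonempty S := ⟨X ⟨0, by omega⟩ ω0⟩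
  constructor
  · intro h a ha
    exact UAux.iIndep_of_Ffull μ X hX
      (fun c hc => UAux.Ffull_of_uI μ X hX k hk2 h c ((Finset.card_le_card hc).trans ha))
  · intro h j hj1 hjk
    unfold uI
    have hsum : ∀ p ∈ Finset.univ.filter (fun p : Fin n × Fin n => p.1 < p.2),
        ∑ a' ∈ (Finset.univ \ ({p.1, p.2} : Finset (Fin n))).powerset.filter
          (fun a' : Finset (Fin n) => a'.card = j - 1),
          cmi μ (X p.1) (X p.2) (restr X a') = 0 := by
      rintro ⟨i1, i2⟩ hp
      have hlt : i1 < i2 := (Finset.mem_filter.mp hp).2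
      apply Finset.sum_eq_zero
      intro a' ha'
      obtain ⟨hsub, hcard⟩ := Finset.mem_filter.mp ha'
      rw [Finset.mem_powerset] at hsub
      have h1a : i1 ∉ a' := fun h1 =>
        (Finset.mem_sdiff.mp (hsub h1)).2 (Finset.mem_insert_self _ _)
      have h2a : i2 ∉ a' := fun h2 =>
        (Finset.mem_sdiff.mp (hsub h2)).2
          (Finset.mem_insert_of_mem (Finset.mem_singleton_self _))
      have h12 : i1 ∉ insert i2 a' := by
        intro hmem
        rcases Finset.mem_insert.mp hmem with heq | hmem'
        · exact absurd heq hlt.ne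
        · exact h1a hmem'
      have hcard3 : (insert i1 (insert i2 a')).card ≤ k := by
        have c1 := Finset.card_insert_le i1 (insert i2 a')
        have c2 := Finset.card_insert_le i2 a'
        omega
      have hFall : ∀ c' ⊆ insert i1 (insert i2 a'), UAux.Ffull μ X c' := by
        intro c' hc'
        exact UAux.Ffull_of_iIndep μ X hX
          (h c' ((Finset.card_le_card hc').trans hcard3))
      have hs1 : insert i1 a' ⊆ insert i1 (insert i2 a') :=
        Finset.insert_subset_insert _ (Finset.subset_insert _ _)
      have hs2 : insert i2 a' ⊆ insert i1 (insert i2 a') := Finset.subset_insert _ _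
      have hs3 : a' ⊆ insert i1 (insert i2 a') :=
        (Finset.subset_insert _ _).trans (Finset.subset_insert _ _)
      show cmi μ (X i1) (X i2) (restr X a') = 0
      unfold cmi
      rw [UAux.L_ins_ent μ X h1a, UAux.L_ins_ent μ X h2a, UAux.L_two_ent μ X h12 h2a,
        UAux.ent_restr_eq_sum μ X hX _ (fun c' hc' => hFall c' (hc'.trans hs1)),
        UAux.ent_restr_eq_sum μ X hX _ (fun c' hc' => hFall c' (hc'.trans hs2)),
        UAux.ent_restr_eq_sum μ X hX _ hFall,
        UAux.ent_restr_eq_sum μ X hX _ (fun c' hc' => hFall c' (hc'.trans hs3)),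
        Finset.sum_insert h1a, Finset.sum_insert h2a, Finset.sum_insert h12,
        Finset.sum_insert h2a]
      ring
    rw [Finset.sum_eq_zero hsum, mul_zero]
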